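/- Let C_r ⊆ X be a nonempty closed set that is super-regular at x̄ ∈ C_r. Then the set K = {(x,…,x) ∈ X^{r-1} : x ∈ C_r} is super-regular at the diagonal point (x̄,…,x̄). -/

import Mathlib

open Filter Metric
open scoped RealInnerProductSpace Pointwise

noncomputable section

variable {X : Type*} [NormedAddCommGroup X] [InnerProductSpace ℝ X]

/-- Set-valued metric projection onto `C`. -/
def proj (C : Set X) (x : X) : Set X :=
  {p | p ∈ C ∧ ‖x - p‖ = Metric.infDist x C}

/-- Limiting normal cone to `C` at `x` (empty when `x ∉ C`). -/
def limNormalCone (C : Set X) (x : X) : Set X :=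
  {u | x ∈ C ∧ ∃ (τ : ℕ → ℝ) (xs zs : ℕ → X),
    (∀ k, 0 ≤ τ k) ∧ (∀ k, zs k ∈ proj C (xs k)) ∧
    Tendsto xs atTop (nhds x) ∧
    Tendsto (fun k => τ k • (zs k - xs k)) atTop (nhds u)}

/-- Super-regularity of a set at a point. -/
def SuperRegular (C : Set X) (xb : X) : Prop :=
  ∀ ε > 0, ∃ δ > 0, ∀ y ∈ C ∩ Metric.closedBall xb δ, ∀ z ∈ C ∩ Metric.closedBall xb δ,
    ∀ u ∈ limNormalCone C z, ⟪u, y - z⟫ ≤ ε * ‖u‖ * ‖y - z‖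

/-- Diagonal embedding of `X` into the product `PiLp 2 (fun _ : Fin m => X)`. -/
def diagMap (m : ℕ) (u : X) : PiLp 2 (fun _ : Fin m => X) :=
  (WithLp.equiv 2 _).symm (fun _ => u)

/-- The diagonal subspace of the product space. -/
def diagSub (m : ℕ) (X : Type*) [NormedAddCommGroup X] [InnerProductSpace ℝ X] :
    Submodule ℝ (PiLp 2 (fun _ : Fin m => X)) where
  carrier := {x | ∀ i j, x i = x j}
  add_mem' := by
    intro a b ha hb i j
    show a i + b i = a j + b j
    rw [ha i j, hb i j]
  zero_mem' := by intro i j; rfl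
  smul_mem' := by
    intro c a ha i j
    show c • a i = c • a j
    rw [ha i j]

lemma diagMap_apply (m : ℕ) (w : X) (i : Fin m) : diagMap m w i = w := rfl

lemma diag_norm (m : ℕ) (w : X) : ‖diagMap m w‖ = Real.sqrt m * ‖w‖ := by
  have h : ‖diagMap m w‖ ^ 2 = (m : ℝ) * ‖w‖ ^ 2 := by
    rw [PiLp.norm_sq_eq_of_L2]
    simp [diagMap, Finset.sum_const, Finset.card_univ, nsmul_eq_mul]
  calc ‖diagMap m w‖ = Real.sqrt (‖diagMap m w‖ ^ 2) := (Real.sqrt_sq (norm_nonneg _)).symm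
    _ = Real.sqrt ((m : ℝ) * ‖w‖ ^ 2) := by rw [h]
    _ = Real.sqrt m * ‖w‖ := by
        rw [Real.sqrt_mul (Nat.cast_nonneg m), Real.sqrt_sq (norm_nonneg _)]

lemma comp_norm_le (m : ℕ) (w : PiLp 2 (fun _ : Fin m => X)) (i : Fin m) : ‖w i‖ ≤ ‖w‖ := by
  have h2 : ‖w i‖ ^ 2 ≤ ‖w‖ ^ 2 := by
    rw [PiLp.norm_sq_eq_of_L2]
    exact Finset.single_le_sum (fun j _ => sq_nonneg ‖w j‖) (Finset.mem_univ i)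
  nlinarith [norm_nonneg w, norm_nonneg (w i)]

lemma comp_tendsto {m : ℕ} {f : ℕ → PiLp 2 (fun _ : Fin m => X)}
    {w : PiLp 2 (fun _ : Fin m => X)} (hf : Tendsto f atTop (nhds w)) (i : Fin m) :
    Tendsto (fun k => f k i) atTop (nhds (w i)) := by
  have hc : Continuous fun v : PiLp 2 (fun _ : Fin m => X) => v i :=
    (continuous_apply i).comp (PiLp.continuous_ofLp 2 (fun _ : Fin m => X))
  exact (hc.tendsto w).comp hf

lemma sum_sq_split {m : ℕ} (hm : m ≠ 0) (x : Fin m → X) (c : X) :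
    ∑ i, ‖x i - c‖ ^ 2 =
      (∑ i, ‖x i - (m : ℝ)⁻¹ • ∑ j, x j‖ ^ 2) + (m : ℝ) * ‖(m : ℝ)⁻¹ • (∑ j, x j) - c‖ ^ 2 := by
  have hmR : (m : ℝ) ≠ 0 := Nat.cast_ne_zero.mpr hm
  set s : X := (m : ℝ)⁻¹ • ∑ j, x j with hsdef
  have hs : ∑ i, (x i - s) = 0 := by
    rw [Finset.sum_sub_distrib, Finset.sum_const, Finset.card_univ, Fintype.card_fin,
      ← Nat.cast_smul_eq_nsmul ℝ, hsdef, smul_smul, mul_inv_cancel₀ hmR, one_smul, sub_self]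
  have hterm : ∀ i : Fin m, ‖x i - c‖ ^ 2
      = ‖x i - s‖ ^ 2 + (2 * ⟪x i - s, s - c⟫ + ‖s - c‖ ^ 2) := by
    intro i
    have h : x i - c = (x i - s) + (s - c) := by abel
    rw [h, norm_add_sq_real]; ring
  calc ∑ i, ‖x i - c‖ ^ 2
      = ∑ i, (‖x i - s‖ ^ 2 + (2 * ⟪x i - s, s - c⟫ + ‖s - c‖ ^ 2)) :=
        Finset.sum_congr rfl fun i _ => hterm i
    _ = (∑ i, ‖x i - s‖ ^ 2) + ((∑ i, 2 * ⟪x i - s, s - c⟫) + ∑ i : Fin m, ‖s - c‖ ^ 2) := by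
        rw [Finset.sum_add_distrib, Finset.sum_add_distrib]
    _ = (∑ i, ‖x i - s‖ ^ 2) + (m : ℝ) * ‖s - c‖ ^ 2 := by
        rw [← Finset.mul_sum, ← sum_inner, hs, inner_zero_left, mul_zero, zero_add,
          Finset.sum_const, Finset.card_univ, Fintype.card_fin, nsmul_eq_mul]

theorem stmt7 (r : ℕ) (hr : 2 ≤ r)
    (Cr : Set X) (hne : Cr.Nonempty) (hcl : IsClosed Cr)
    (xb : X) (hxb : xb ∈ Cr) (hsr : SuperRegular Cr xb) :
    SuperRegular {y : PiLp 2 (fun _ : Fin (r - 1) => X) | ∃ a ∈ Cr, ∀ i, y i = a}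
      (diagMap (r - 1) xb) := by
  set m := r - 1 with hmdef
  have hm0 : m ≠ 0 := by omega
  have hmR : (m : ℝ) ≠ 0 := Nat.cast_ne_zero.mpr hm0
  have hmRpos : (0 : ℝ) ≤ (m : ℝ) := Nat.cast_nonneg m
  set K : Set (PiLp 2 (fun _ : Fin m => X)) := {y | ∃ a ∈ Cr, ∀ i, y i = a} with hKdef
  have hKne : K.Nonempty := ⟨diagMap m xb, xb, hxb, fun _ => rfl⟩
  haveI : Nonempty Cr := hne.to_subtype
  let i0 : Fin m := ⟨0, Nat.pos_of_ne_zero hm0⟩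
  intro ε hε
  obtain ⟨δ, hδ, H⟩ := hsr ε hε
  refine ⟨δ, hδ, ?_⟩
  rintro y ⟨⟨a, haC, hya⟩, hyB⟩ z ⟨⟨b, hbC, hzb⟩, hzB⟩ u hu
  obtain ⟨hzK, τ, xs, zs, hτ, hproj, hxs, hlim⟩ := hu
  -- extract the diagonal value of each `zs k`
  set c : ℕ → X := fun k => zs k i0 with hcdef
  have hck : ∀ k, c k ∈ Cr ∧ ∀ i, zs k i = c k := by
    intro k
    obtain ⟨aa, haa, hzaa⟩ := (hproj k).1
    have h0 : c k = aa := hzaa i0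
    exact ⟨h0 ▸ haa, fun i => (hzaa i).trans h0.symm⟩
  -- the mean of each `xs k`
  set s : ℕ → X := fun k => (m : ℝ)⁻¹ • ∑ i, xs k i with hsdef
  -- squared norm against diagonal points
  have hsq : ∀ (w : PiLp 2 (fun _ : Fin m => X)) (cc : X),
      ‖w - diagMap m cc‖ ^ 2 = ∑ i, ‖w i - cc‖ ^ 2 := by
    intro w cc
    rw [PiLp.norm_sq_eq_of_L2]
    exact Finset.sum_congr rfl fun i _ => by rw [PiLp.sub_apply, diagMap_apply]
  -- zs k is the diagonal of c k
  have hzs_eq : ∀ k, zs k = diagMap m (c k) := by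
    intro k; apply WithLp.ofLp_injective 2; funext i; exact (hck k).2 i
  set v : X := ∑ i, u i with hvdef
  -- v is in the limiting normal cone of Cr at b
  have hvN : v ∈ limNormalCone Cr b := by
    refine ⟨hbC, fun k => (m : ℝ) * τ k, s, c,
      fun k => mul_nonneg hmRpos (hτ k), ?_, ?_, ?_⟩
    · -- projection property
      intro k
      have hmin : ∀ cc ∈ Cr, ‖s k - c k‖ ≤ ‖s k - cc‖ := by
        intro cc hcc
        have h1 : ‖xs k - zs k‖ ≤ ‖xs k - diagMap m cc‖ := by
          rw [(hproj k).2]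
          have := infDist_le_dist_of_mem (show diagMap m cc ∈ K from ⟨cc, hcc, fun _ => rfl⟩)
            (x := xs k)
          rwa [dist_eq_norm] at this
        have h2 : ‖xs k - zs k‖ ^ 2 ≤ ‖xs k - diagMap m cc‖ ^ 2 := by
          nlinarith [norm_nonneg (xs k - zs k), norm_nonneg (xs k - diagMap m cc)]
        rw [hzs_eq k, hsq, hsq, sum_sq_split hm0 (fun i => xs k i) (c k),
          sum_sq_split hm0 (fun i => xs k i) cc] at h2
        have hmpos : (0 : ℝ) < (m : ℝ) := lt_of_le_of_ne hmRpos (Ne.symm hmR)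
        have h3 : ‖s k - c k‖ ^ 2 ≤ ‖s k - cc‖ ^ 2 := by
          have := h2
          simp only [hsdef] at *
          nlinarith
        nlinarith [norm_nonneg (s k - c k), norm_nonneg (s k - cc)]
      refine ⟨(hck k).1, le_antisymm ?_ ?_⟩
      · rw [infDist_eq_iInf]
        refine le_ciInf fun w => ?_
        rw [dist_eq_norm]
        exact hmin w w.2
      · have := infDist_le_dist_of_mem (hck k).1 (x := s k)
        rwa [dist_eq_norm] at this
    · -- s tends to b
      have hco : ∀ i : Fin m, Tendsto (fun k => xs k i) atTop (nhds b) := by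
        intro i
        have := comp_tendsto hxs i
        rwa [hzb i] at this
      have hsum : Tendsto (fun k => ∑ i, xs k i) atTop (nhds (∑ _i : Fin m, b)) :=
        tendsto_finset_sum _ fun i _ => hco i
      have hlim2 := hsum.const_smul ((m : ℝ)⁻¹)
      have hb : (m : ℝ)⁻¹ • (∑ _i : Fin m, b) = b := by
        rw [Finset.sum_const, Finset.card_univ, Fintype.card_fin, ← Nat.cast_smul_eq_nsmul ℝ,
          smul_smul, inv_mul_cancel₀ hmR, one_smul]
      rw [hb] at hlim2
      exact hlim2
    · -- scaled differences tend to v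
      have hfun : ∀ k, ((m : ℝ) * τ k) • (c k - s k) = ∑ i, (τ k • (zs k - xs k)) i := by
        intro k
        have hrhs : ∀ i : Fin m, (τ k • (zs k - xs k)) i = τ k • (c k - xs k i) := by
          intro i
          rw [PiLp.smul_apply, PiLp.sub_apply, (hck k).2 i]
        rw [Finset.sum_congr rfl fun i _ => hrhs i, ← Finset.smul_sum,
          Finset.sum_sub_distrib, Finset.sum_const, Finset.card_univ, Fintype.card_fin,
          ← Nat.cast_smul_eq_nsmul ℝ]
        have hms : (m : ℝ) • s k = ∑ i, xs k i := by
          rw [hsdef, smul_smul, mul_inv_cancel₀ hmR, one_smul]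
        rw [← hms]
        module
      have hlim3 : Tendsto (fun k => ∑ i, (τ k • (zs k - xs k)) i) atTop (nhds v) :=
        tendsto_finset_sum _ fun i _ => comp_tendsto hlim i
      exact (funext hfun : (fun k => ((m : ℝ) * τ k) • (c k - s k)) = _) ▸ hlim3
  -- ball memberships
  have hball : ∀ (w : PiLp 2 (fun _ : Fin m => X)) (d : X), (∀ i, w i = d) →
      w ∈ closedBall (diagMap m xb) δ → d ∈ closedBall xb δ := by
    intro w d hw hwB
    rw [mem_closedBall, dist_eq_norm] at hwB ⊢
    have h1 : d - xb = (w - diagMap m xb) i0 := by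
      rw [PiLp.sub_apply, hw i0, diagMap_apply]
    rw [h1]
    exact le_trans (comp_norm_le m _ i0) hwB
  have haB : a ∈ closedBall xb δ := hball y a hya hyB
  have hbB : b ∈ closedBall xb δ := hball z b hzb hzB
  have hmain := H a ⟨haC, haB⟩ b ⟨hbC, hbB⟩ v hvN
  -- rewrite inner product and norms
  have hyz : y - z = diagMap m (a - b) := by
    apply WithLp.ofLp_injective 2; funext i
    rw [PiLp.sub_apply, hya i, hzb i]; rfl
  have hInner : ⟪u, y - z⟫ = ⟪v, a - b⟫ := by
    rw [hyz, PiLp.inner_apply, hvdef, sum_inner]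
    exact Finset.sum_congr rfl fun i _ => by rw [diagMap_apply]
  have hnormyz : ‖y - z‖ = Real.sqrt m * ‖a - b‖ := by rw [hyz, diag_norm]
  have hvle : ‖v‖ ≤ Real.sqrt m * ‖u‖ := by
    have h1 : ‖v‖ ^ 2 ≤ ‖u‖ * (Real.sqrt m * ‖v‖) := by
      have h2 : ⟪u, diagMap m v⟫ = ‖v‖ ^ 2 := by
        rw [PiLp.inner_apply, ← real_inner_self_eq_norm_sq, hvdef, sum_inner]
        exact Finset.sum_congr rfl fun i _ => by rw [diagMap_apply]
      calc ‖v‖ ^ 2 = ⟪u, diagMap m v⟫ := h2.symm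
        _ ≤ ‖u‖ * ‖diagMap m v‖ := real_inner_le_norm u (diagMap m v)
        _ = ‖u‖ * (Real.sqrt m * ‖v‖) := by rw [diag_norm]
    rcases eq_or_lt_of_le (norm_nonneg v) with hv0 | hv0
    · rw [← hv0]
      positivity
    · nlinarith [Real.sqrt_nonneg (m : ℝ), norm_nonneg u]
  rw [hInner, hnormyz]
  have hab : (0 : ℝ) ≤ ‖a - b‖ := norm_nonneg _
  nlinarith [mul_le_mul_of_nonneg_right (mul_le_mul_of_nonneg_left hvle hε.le) hab]
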